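/- Commutation relation (type A1 × A1): if the Cartan integers vanish, i.e. c_α(β) = 0 and c_β(α) = 0, then the Demazure operators commute: δ_α(δ_β(u)) = δ_β(δ_α(u)) for every u ∈ ℤ[M]. -/

import Mathlib

open AddMonoidAlgebra

noncomputable section

/-- The reflection `λ ↦ λ - c(λ) • α` associated to a root `α` and coroot `c`,
as an additive homomorphism of the weight lattice `M`. -/
def demazureReflection {M : Type*} [AddCommGroup M] (α : M) (c : M →+ ℤ) : M →+ M where
  toFun := fun lam => lam - c lam • α
  map_zero' := by simp
  map_add' := fun x y => by simp only [map_add, add_smul]; abel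

/-- The ring endomorphism of the group algebra `ℤ[M]` induced by the reflection
`s(λ) = λ - c(λ)·α`; it sends `e^λ` to `e^{s(λ)}`. -/
def demazureReflectionAlg {M : Type*} [AddCommGroup M] (α : M) (c : M →+ ℤ) :
    AddMonoidAlgebra ℤ M →+* AddMonoidAlgebra ℤ M :=
  mapDomainRingHom ℤ (demazureReflection α c)

theorem demazureReflection_apply' {M : Type*} [AddCommGroup M] (α : M) (c : M →+ ℤ) (l : M) :
    demazureReflection α c l = l - c l • α := rfl

theorem demazureReflectionAlg_apply' {M : Type*} [AddCommGroup M] (α : M) (c : M →+ ℤ)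
    (u : AddMonoidAlgebra ℤ M) :
    demazureReflectionAlg α c u = AddMonoidAlgebra.mapDomain (demazureReflection α c) u := rfl

/-- Commutation relation in type A1 × A1: if cα(β) = 0 and cβ(α) = 0 then the
Demazure operators δα and δβ commute. -/
theorem demazure_commute {M : Type*} [AddCommGroup M]
    [Module.Free ℤ M] [Module.Finite ℤ M]
    (α β : M) (hαβ : LinearIndependent ℤ ![α, β])
    (cα cβ : M →+ ℤ) (hcα : cα α = 2) (hcβ : cβ β = 2)
    (δα δβ : AddMonoidAlgebra ℤ M →ₗ[ℤ] AddMonoidAlgebra ℤ M)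
    (hδα : ∀ u : AddMonoidAlgebra ℤ M,
      (1 - single (-α) 1) * δα u = u - single (-α) 1 * demazureReflectionAlg α cα u)
    (hδβ : ∀ u : AddMonoidAlgebra ℤ M,
      (1 - single (-β) 1) * δβ u = u - single (-β) 1 * demazureReflectionAlg β cβ u)
    (h1 : cα β = 0) (h2 : cβ α = 0) :
    ∀ u : AddMonoidAlgebra ℤ M, δα (δβ u) = δβ (δα u) := by
  -- `M` embeds in a `Finsupp` over `ℤ`, hence has unique sums, so `ℤ[M]` has no zero divisors.
  have : UniqueSums M :=
    ((Module.Free.chooseBasis ℤ M).repr.toAddEquiv).uniqueSums_iff.mpr inferInstance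
  intro u
  have hα0 : α ≠ 0 := by have := hαβ.ne_zero 0; simpa using this
  have hβ0 : β ≠ 0 := by have := hαβ.ne_zero 1; simpa using this
  set a : AddMonoidAlgebra ℤ M := single (-α) 1 with ha_def
  set b : AddMonoidAlgebra ℤ M := single (-β) 1 with hb_def
  set σα := demazureReflectionAlg α cα with hσα_def
  set σβ := demazureReflectionAlg β cβ with hσβ_def
  -- nonvanishing of 1 - e^{-γ} for γ ≠ 0
  have hne : ∀ γ : M, γ ≠ 0 → (1 : AddMonoidAlgebra ℤ M) - single (-γ) 1 ≠ 0 := by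
    intro γ hγ h
    have h' : (single 0 1 : AddMonoidAlgebra ℤ M) = single (-γ) 1 := by
      have := sub_eq_zero.mp h
      rwa [AddMonoidAlgebra.one_def] at this
    rcases AddMonoidAlgebra.single_inj.mp h' with ⟨h0, -⟩ | ⟨h0, -⟩
    · exact hγ (by simpa using h0.symm)
    · exact one_ne_zero h0
  have ha : (1 : AddMonoidAlgebra ℤ M) - a ≠ 0 := hne α hα0
  have hb : (1 : AddMonoidAlgebra ℤ M) - b ≠ 0 := hne β hβ0
  -- the reflections commute
  have hrefl : ∀ l : M, demazureReflection α cα (demazureReflection β cβ l) =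
      demazureReflection β cβ (demazureReflection α cα l) := by
    intro l
    simp only [demazureReflection_apply', map_sub, map_zsmul, h1, h2, smul_eq_mul,
      mul_zero, zero_smul, sub_zero, smul_zero, sub_smul]
    abel
  have hAlg : ∀ v : AddMonoidAlgebra ℤ M, σα (σβ v) = σβ (σα v) := by
    intro v
    rw [hσα_def, hσβ_def]
    simp only [demazureReflectionAlg_apply']
    have hcomp : ∀ (f g : M → M) (x : AddMonoidAlgebra ℤ M),
        AddMonoidAlgebra.mapDomain f (AddMonoidAlgebra.mapDomain g x) =
          AddMonoidAlgebra.mapDomain (f ∘ g) x := by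
      intro f g x; ext; simp [Finsupp.mapDomain_comp]
    rw [hcomp, hcomp]
    exact congrFun (congrArg _ (funext hrefl)) v
  -- σα fixes b and σβ fixes a
  have hσαb : σα b = b := by
    rw [hσα_def, hb_def, demazureReflectionAlg_apply', AddMonoidAlgebra.mapDomain_single,
      demazureReflection_apply']
    simp [h1]
  have hσβa : σβ a = a := by
    rw [hσβ_def, ha_def, demazureReflectionAlg_apply', AddMonoidAlgebra.mapDomain_single,
      demazureReflection_apply']
    simp [h2]
  -- σα commutes with δβ and σβ commutes with δα
  have key1 : ∀ v : AddMonoidAlgebra ℤ M, σα (δβ v) = δβ (σα v) := by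
    intro v
    refine mul_left_cancel₀ hb ?_
    calc (1 - b) * σα (δβ v) = σα ((1 - b) * δβ v) := by rw [map_mul, map_sub, map_one, hσαb]
      _ = σα (v - b * σβ v) := by rw [hδβ v]
      _ = σα v - b * σβ (σα v) := by rw [map_sub, map_mul, hσαb, hAlg]
      _ = (1 - b) * δβ (σα v) := (hδβ (σα v)).symm
  have key2 : ∀ v : AddMonoidAlgebra ℤ M, σβ (δα v) = δα (σβ v) := by
    intro v
    refine mul_left_cancel₀ ha ?_
    calc (1 - a) * σβ (δα v) = σβ ((1 - a) * δα v) := by rw [map_mul, map_sub, map_one, hσβa]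
      _ = σβ (v - a * σα v) := by rw [hδα v]
      _ = σβ v - a * σα (σβ v) := by rw [map_sub, map_mul, hσβa, ← hAlg]
      _ = (1 - a) * δα (σβ v) := (hδα (σβ v)).symm
  -- main computation: cancel the nonzero factor (1-a)(1-b)
  refine mul_left_cancel₀ (mul_ne_zero ha hb) ?_
  calc (1 - a) * (1 - b) * δα (δβ u)
      = (1 - b) * ((1 - a) * δα (δβ u)) := by ring
    _ = (1 - b) * (δβ u - a * σα (δβ u)) := by rw [hδα (δβ u)]
    _ = (1 - b) * δβ u - a * ((1 - b) * δβ (σα u)) := by rw [key1]; ring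
    _ = (u - b * σβ u) - a * (σα u - b * σβ (σα u)) := by rw [hδβ u, hδβ (σα u)]
    _ = (u - a * σα u) - b * (σβ u - a * σα (σβ u)) := by rw [hAlg u]; ring
    _ = (1 - a) * δα u - b * ((1 - a) * δα (σβ u)) := by rw [← hδα u, ← hδα (σβ u)]
    _ = (1 - a) * ((1 - b) * δβ (δα u)) := by rw [hδβ (δα u), key2]; ring
    _ = (1 - a) * (1 - b) * δβ (δα u) := by ring
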